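/- Let f be a Schur-convex function on probability distributions on k elements, let p be a probability distribution on k elements with non-increasingly ordered entries, and let δ ≥ 0. Then the flattest δ-approximation p̲^(δ) satisfies ‖p − p̲^(δ)‖ ≤ δ and f(p̲^(δ)) ≤ f(q) for every probability distribution q with ‖q − p‖ ≤ δ; that is, the smoothed minimum f̲^(δ)(p) = min_{‖q−p‖≤δ} f(q) is attained and equals f(p̲^(δ)). -/
import Mathlib


open Finset

noncomputable section

/-- The ℓ¹ distance `‖a − b‖ = Σᵢ |aᵢ − bᵢ|` between two vectors in `ℝ^k`. -/
def l1dist {k : ℕ} (a b : Fin k → ℝ) : ℝ := ∑ i, |a i - b i|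

/-- A probability distribution on `k` elements: nonnegative entries summing to 1. -/
def IsProbDist {k : ℕ} (p : Fin k → ℝ) : Prop := (∀ i, 0 ≤ p i) ∧ ∑ i, p i = 1

/-- The vector `a` rearranged in non-increasing order, `a↓`. -/
def descSort {k : ℕ} (a : Fin k → ℝ) : Fin k → ℝ := fun i => a (Tuple.sort a i.rev)

/-- The sum of the first `l` entries of `a` (1-based indexing: entries `1,…,l`). -/
def psum {k : ℕ} (a : Fin k → ℝ) (l : ℕ) : ℝ :=
  ∑ i ∈ univ.filter (fun i : Fin k => (i : ℕ) < l), a i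

/-- The sum of the entries of `a` from position `l` to `k` (1-based indexing). -/
def tailSum {k : ℕ} (a : Fin k → ℝ) (l : ℕ) : ℝ :=
  ∑ i ∈ univ.filter (fun i : Fin k => l ≤ (i : ℕ) + 1), a i

/-- `a` majorizes `b` (`a ≻ b`): the total sums agree and all partial sums of the
non-increasing rearrangements satisfy `Σ_{i=1}^l a↓ᵢ ≥ Σ_{i=1}^l b↓ᵢ` for `l = 1,…,k`. -/
def Majorizes {k : ℕ} (a b : Fin k → ℝ) : Prop :=
  (∑ i, a i = ∑ i, b i) ∧
  ∀ l : ℕ, 1 ≤ l → l ≤ k → psum (descSort b) l ≤ psum (descSort a) l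

/-- The distribution `e₁ = (1,0,…,0)`. -/
def e1 (k : ℕ) : Fin k → ℝ := fun i => if (i : ℕ) = 0 then 1 else 0

/-- The uniform distribution `η = (1/k,…,1/k)`. -/
def unif (k : ℕ) : Fin k → ℝ := fun _ => (k : ℝ)⁻¹

/-- The unnormalised vector `r` in the construction of the steepest approximation:
`r₁ = p₁ + δ/2`, `rᵢ = pᵢ` otherwise. -/
def steepR {k : ℕ} (δ : ℝ) (p : Fin k → ℝ) : Fin k → ℝ :=
  fun i => if (i : ℕ) = 0 then p i + δ / 2 else p i

/-- `lstar ∈ {1,…,k}` is the truncation index of the steepest `δ`-approximation of `p`: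
`Σ_{i=1}^{l*} rᵢ ≤ 1 < Σ_{i=1}^{l*+1} rᵢ` (the second sum being meaningful for `l* < k`). -/
def IsTruncIdx {k : ℕ} (δ : ℝ) (p : Fin k → ℝ) (lstar : ℕ) : Prop :=
  1 ≤ lstar ∧ lstar ≤ k ∧ psum (steepR δ p) lstar ≤ 1 ∧
    (lstar < k → 1 < psum (steepR δ p) (lstar + 1))

/-- `pbar` is the steepest `δ`-approximation `p̄^(δ)` of `p` (assumed non-increasingly
ordered): if `‖p − e₁‖ ≤ δ` then `pbar = e₁`; otherwise `pbar` agrees with `r` on the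
first `l*` entries, has `1 − Σ_{i=1}^{l*} rᵢ` at position `l*+1`, and `0` afterwards. -/
def IsSteepest {k : ℕ} (δ : ℝ) (p pbar : Fin k → ℝ) : Prop :=
  (l1dist p (e1 k) ≤ δ ∧ pbar = e1 k) ∨
  (δ < l1dist p (e1 k) ∧ ∃ lstar : ℕ, IsTruncIdx δ p lstar ∧
    ∀ i : Fin k, pbar i =
      if (i : ℕ) < lstar then steepR δ p i
      else if (i : ℕ) = lstar then 1 - psum (steepR δ p) lstar
      else 0)

/-- `ε(x) = Σ_{i : pᵢ ≥ x} (pᵢ − x)`. -/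
def epsFn {k : ℕ} (p : Fin k → ℝ) (x : ℝ) : ℝ :=
  ∑ i ∈ univ.filter (fun i : Fin k => x ≤ p i), (p i - x)

/-- `γ(y) = Σ_{i : pᵢ ≤ y} (y − pᵢ)`. -/
def gammaFn {k : ℕ} (p : Fin k → ℝ) (y : ℝ) : ℝ :=
  ∑ i ∈ univ.filter (fun i : Fin k => p i ≤ y), (y - p i)

/-- `pflat` is the flattest `δ`-approximation of `p` built from the cutting level `x*` and
the filling level `y*`: `x*, y* ∈ [0,1]`, `ε(x*) = γ(y*) = δ/2`, and `pflat` equals `x*`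
where `pᵢ ≥ x*`, equals `y*` where `pᵢ ≤ y*`, and equals `pᵢ` otherwise. -/
def IsFlattestWith {k : ℕ} (δ : ℝ) (p pflat : Fin k → ℝ) (x y : ℝ) : Prop :=
  x ∈ Set.Icc (0 : ℝ) 1 ∧ y ∈ Set.Icc (0 : ℝ) 1 ∧
  epsFn p x = δ / 2 ∧ gammaFn p y = δ / 2 ∧
  ∀ i : Fin k, pflat i = if x ≤ p i then x else if p i ≤ y then y else p i

/-- `pflat` is the flattest `δ`-approximation `p̲^(δ)` of `p` (assumed non-increasingly
ordered): if `‖p − η‖ ≤ δ` then `pflat = η`; otherwise it is obtained by cutting at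
level `x*` and filling at level `y*`. -/
def IsFlattest {k : ℕ} (δ : ℝ) (p pflat : Fin k → ℝ) : Prop :=
  (l1dist p (unif k) ≤ δ ∧ pflat = unif k) ∨
  (δ < l1dist p (unif k) ∧ ∃ x y : ℝ, IsFlattestWith δ p pflat x y)

end

section H2
variable {k : ℕ}

noncomputable def tailS {k : ℕ} (a : Fin k → ℝ) (l : ℕ) : ℝ :=
  ∑ i ∈ univ.filter (fun i : Fin k => l ≤ (i : ℕ)), a i

lemma fin_le_apply {l : ℕ} (f : Fin l → Fin k) (hf : StrictMono f) (j : Fin l) :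
    (j : ℕ) ≤ (f j : ℕ) := by
  obtain ⟨j, hj⟩ := j
  induction j with
  | zero => simp
  | succ n ih =>
    have h1 : (⟨n, Nat.lt_of_succ_lt hj⟩ : Fin l) < ⟨n + 1, hj⟩ := by simp [Fin.lt_def]
    have h2 := hf h1
    have h3 := ih (Nat.lt_of_succ_lt hj)
    rw [Fin.lt_def] at h2
    simp only [Fin.val_mk] at h2 h3 ⊢
    omega

lemma card_filter_mid (a b : ℕ) (hb : b ≤ k) :
    (univ.filter (fun i : Fin k => a ≤ (i : ℕ) ∧ (i : ℕ) < b)).card = b - a := by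
  rw [Finset.card_filter, Fin.sum_univ_eq_sum_range (fun j => if a ≤ j ∧ j < b then (1:ℕ) else 0),
    ← Finset.card_filter]
  have : (Finset.range k).filter (fun j => a ≤ j ∧ j < b) = Finset.Ico a b := by
    ext j; simp only [Finset.mem_filter, Finset.mem_range, Finset.mem_Ico]; omega
  rw [this, Nat.card_Ico]

lemma card_filter_lt (b : ℕ) (hb : b ≤ k) :
    (univ.filter (fun i : Fin k => (i : ℕ) < b)).card = b := by
  have := card_filter_mid (k := k) 0 b hb
  simp only [Nat.zero_le, true_and, Nat.sub_zero] at this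
  exact this

lemma card_filter_ge (a : ℕ) :
    (univ.filter (fun i : Fin k => a ≤ (i : ℕ))).card = k - a := by
  rw [Finset.card_filter, Fin.sum_univ_eq_sum_range (fun j => if a ≤ j then (1:ℕ) else 0),
    ← Finset.card_filter]
  have : (Finset.range k).filter (fun j => a ≤ j) = Finset.Ico a k := by
    ext j; simp only [Finset.mem_filter, Finset.mem_range, Finset.mem_Ico]; omega
  rw [this, Nat.card_Ico]

lemma psum_add_tailS (g : Fin k → ℝ) (l : ℕ) : psum g l + tailS g l = ∑ i, g i := by
  rw [psum, tailS]
  rw [← Finset.sum_filter_add_sum_filter_not univ (fun i : Fin k => (i : ℕ) < l) g]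
  congr 1
  apply Finset.sum_congr _ (fun _ _ => rfl)
  apply Finset.filter_congr
  intro i _; simp only [not_lt]

lemma psum_split (g : Fin k → ℝ) {l1 l2 : ℕ} (h : l1 ≤ l2) :
    psum g l2 = psum g l1 + ∑ i ∈ univ.filter (fun i : Fin k => l1 ≤ (i : ℕ) ∧ (i : ℕ) < l2), g i := by
  rw [psum, ← Finset.sum_filter_add_sum_filter_not (univ.filter (fun i : Fin k => (i : ℕ) < l2))
    (fun i : Fin k => (i : ℕ) < l1) g, Finset.filter_filter, Finset.filter_filter]
  congr 1
  · rw [psum]; apply Finset.sum_congr _ (fun _ _ => rfl)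
    apply Finset.filter_congr; intro i _; constructor <;> intro hh
    · omega
    · exact ⟨by omega, hh⟩
  · apply Finset.sum_congr _ (fun _ _ => rfl)
    apply Finset.filter_congr; intro i _; constructor <;> intro hh <;> omega

lemma filter_lt_eq_image {l : ℕ} (hl : l ≤ k) :
    univ.filter (fun i : Fin k => (i : ℕ) < l) = Finset.image (Fin.castLE hl) univ := by
  ext i
  simp only [Finset.mem_filter, Finset.mem_univ, true_and, Finset.mem_image]
  constructor
  · intro h; exact ⟨⟨(i : ℕ), h⟩, by apply Fin.ext; rfl⟩
  · rintro ⟨j, -, rfl⟩; exact j.isLt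

lemma psum_eq_sum_fin (g : Fin k → ℝ) {l : ℕ} (hl : l ≤ k) :
    psum g l = ∑ j : Fin l, g (Fin.castLE hl j) := by
  rw [psum, filter_lt_eq_image hl, Finset.sum_image (fun a _ b _ h => Fin.castLE_injective hl h)]

lemma sum_le_psum {g : Fin k → ℝ} (hg : Antitone g) (s : Finset (Fin k)) :
    ∑ i ∈ s, g i ≤ psum g s.card := by
  have hsk : s.card ≤ k := by
    simpa using Finset.card_le_card (Finset.subset_univ s)
  rw [psum_eq_sum_fin g hsk]
  have hs : ∑ i ∈ s, g i = ∑ j : Fin s.card, g (s.orderEmbOfFin rfl j) := by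
    rw [← Finset.sum_image (fun a _ b _ h => (s.orderEmbOfFin rfl).injective h)]
    apply Finset.sum_congr _ (fun _ _ => rfl)
    ext i
    simp only [Finset.mem_image, Finset.mem_univ, true_and]
    constructor
    · intro h
      have h2 : i ∈ Set.range (s.orderEmbOfFin rfl) := by
        rw [Finset.range_orderEmbOfFin]; exact h
      exact h2
    · rintro ⟨j, rfl⟩; exact Finset.orderEmbOfFin_mem s rfl j
  rw [hs]
  apply Finset.sum_le_sum
  intro j _
  apply hg
  rw [Fin.le_def]
  exact fin_le_apply _ (s.orderEmbOfFin rfl).strictMono j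
end H2
section H3
variable {k : ℕ}

noncomputable def dperm (a : Fin k → ℝ) : Equiv.Perm (Fin k) :=
  Fin.revPerm.trans (Tuple.sort a)

lemma descSort_eq_comp (a : Fin k → ℝ) : descSort a = a ∘ (dperm a) := rfl

lemma antitone_descSort (a : Fin k → ℝ) : Antitone (descSort a) := by
  intro i j hij
  have hm := Tuple.monotone_sort a
  exact hm (by rwa [Fin.rev_le_rev])

lemma sum_descSort (a : Fin k → ℝ) : ∑ i, descSort a i = ∑ i, a i := by
  rw [descSort_eq_comp]
  exact Equiv.sum_comp (dperm a) a

lemma sum_le_psum_descSort (a : Fin k → ℝ) (s : Finset (Fin k)) :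
    ∑ i ∈ s, a i ≤ psum (descSort a) s.card := by
  have h1 : ∑ i ∈ s, a i = ∑ j ∈ s.image (dperm a).symm, descSort a j := by
    rw [Finset.sum_image (fun x _ y _ h => (dperm a).symm.injective h)]
    apply Finset.sum_congr rfl
    intro i _
    rw [descSort_eq_comp]
    simp
  rw [h1]
  have h2 : (s.image (dperm a).symm).card = s.card :=
    Finset.card_image_of_injective s (dperm a).symm.injective
  rw [← h2]
  exact sum_le_psum (antitone_descSort a) _

lemma psum_descSort_le {a : Fin k → ℝ} (ha : Antitone a) {l : ℕ} (hl : l ≤ k) :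
    psum (descSort a) l ≤ psum a l := by
  rw [descSort_eq_comp, psum]
  have h1 : ∑ i ∈ univ.filter (fun i : Fin k => (i : ℕ) < l), (a ∘ dperm a) i
      = ∑ j ∈ (univ.filter (fun i : Fin k => (i : ℕ) < l)).image (dperm a), a j := by
    rw [Finset.sum_image (fun x _ y _ h => (dperm a).injective h)]
    rfl
  rw [h1]
  have h2 := sum_le_psum ha ((univ.filter (fun i : Fin k => (i : ℕ) < l)).image (dperm a))
  rwa [Finset.card_image_of_injective _ (dperm a).injective, card_filter_lt l hl] at h2

lemma psum_univ (g : Fin k → ℝ) : psum g k = ∑ i, g i := by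
  rw [psum]
  apply Finset.sum_congr _ (fun _ _ => rfl)
  apply Finset.filter_true_of_mem
  intro i _; exact i.isLt

lemma head_thresh {g : Fin k → ℝ} (hg : Antitone g) (c : ℝ) {l L : ℕ}
    (hlL : l ≤ L) (hLk : L ≤ k) (h : (L : ℝ) * c ≤ psum g L) :
    (l : ℝ) * c ≤ psum g l := by
  rcases Nat.eq_zero_or_pos l with rfl | hl
  · simp [psum]
  have hlk1 : l - 1 < k := by omega
  set j : Fin k := ⟨l - 1, hlk1⟩ with hj
  have hsplit := psum_split g hlL
  have hcard : (univ.filter (fun i : Fin k => l ≤ (i : ℕ) ∧ (i : ℕ) < L)).card = L - l :=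
    card_filter_mid l L hLk
  rcases le_total c (g j) with hc | hc
  · -- each of first l terms ≥ g j ≥ c
    have : (l : ℝ) * c ≤ psum g l := by
      rw [psum]
      calc (l : ℝ) * c = ∑ _i ∈ univ.filter (fun i : Fin k => (i : ℕ) < l), c := by
            rw [Finset.sum_const, card_filter_lt l (le_trans hlL hLk), nsmul_eq_mul]
        _ ≤ _ := by
            apply Finset.sum_le_sum
            intro i hi
            simp only [Finset.mem_filter] at hi
            exact le_trans hc (hg (by rw [Fin.le_def]; simp only [hj]; omega))
    exact this
  · -- mid terms ≤ g j ≤ c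
    have hmid : ∑ i ∈ univ.filter (fun i : Fin k => l ≤ (i : ℕ) ∧ (i : ℕ) < L), g i
        ≤ ((L - l : ℕ) : ℝ) * c := by
      calc ∑ i ∈ univ.filter (fun i : Fin k => l ≤ (i : ℕ) ∧ (i : ℕ) < L), g i
          ≤ ∑ _i ∈ univ.filter (fun i : Fin k => l ≤ (i : ℕ) ∧ (i : ℕ) < L), c := by
            apply Finset.sum_le_sum
            intro i hi
            simp only [Finset.mem_filter] at hi
            exact le_trans (hg (by rw [Fin.le_def]; simp only [hj]; omega)) hc
        _ = ((L - l : ℕ) : ℝ) * c := by rw [Finset.sum_const, hcard, nsmul_eq_mul]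
    have hcast : ((L - l : ℕ) : ℝ) = (L : ℝ) - (l : ℝ) := by
      rw [Nat.cast_sub hlL]
    rw [hcast] at hmid
    nlinarith [hsplit, hmid, h]

lemma tail_thresh {g : Fin k → ℝ} (hg : Antitone g) (c : ℝ) {m l : ℕ}
    (hml : m ≤ l) (hlk : l ≤ k) (hl1 : 1 ≤ l)
    (h : tailS g m ≤ ((k - m : ℕ) : ℝ) * c) :
    tailS g l ≤ ((k - l : ℕ) : ℝ) * c := by
  have hlk1 : l - 1 < k := by omega
  set j : Fin k := ⟨l - 1, hlk1⟩ with hj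
  have hsplit : tailS g m = (∑ i ∈ univ.filter (fun i : Fin k => m ≤ (i : ℕ) ∧ (i : ℕ) < l), g i)
      + tailS g l := by
    rw [tailS, tailS, ← Finset.sum_filter_add_sum_filter_not
      (univ.filter (fun i : Fin k => m ≤ (i : ℕ))) (fun i : Fin k => (i : ℕ) < l) g,
      Finset.filter_filter, Finset.filter_filter]
    congr 1
    apply Finset.sum_congr _ (fun _ _ => rfl)
    apply Finset.filter_congr; intro i _
    constructor <;> intro hh
    · omega
    · exact ⟨by omega, by omega⟩
  have htail_card : (univ.filter (fun i : Fin k => l ≤ (i : ℕ))).card = k - l := card_filter_ge l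
  have hmid_card := card_filter_mid (k := k) m l hlk
  rcases le_total c (g j) with hc | hc
  · -- mid terms ≥ g j ≥ c
    have hmid : ((l - m : ℕ) : ℝ) * c ≤ ∑ i ∈ univ.filter (fun i : Fin k => m ≤ (i : ℕ) ∧ (i : ℕ) < l), g i := by
      calc ((l - m : ℕ) : ℝ) * c
          = ∑ _i ∈ univ.filter (fun i : Fin k => m ≤ (i : ℕ) ∧ (i : ℕ) < l), c := by
            rw [Finset.sum_const, hmid_card, nsmul_eq_mul]
        _ ≤ _ := by
            apply Finset.sum_le_sum
            intro i hi
            simp only [Finset.mem_filter] at hi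
            exact le_trans hc (hg (by rw [Fin.le_def]; simp only [hj]; omega))
    have hc1 : ((k - m : ℕ) : ℝ) = ((k - l : ℕ) : ℝ) + ((l - m : ℕ) : ℝ) := by
      push_cast [Nat.cast_sub (le_trans hml hlk), Nat.cast_sub hlk, Nat.cast_sub hml]
      ring
    rw [hc1] at h
    nlinarith [hsplit, hmid, h]
  · -- tail terms ≤ g j ≤ c
    calc tailS g l ≤ ∑ _i ∈ univ.filter (fun i : Fin k => l ≤ (i : ℕ)), c := by
          rw [tailS]
          apply Finset.sum_le_sum
          intro i hi
          simp only [Finset.mem_filter] at hi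
          exact le_trans (hg (by rw [Fin.le_def]; simp only [hj]; omega)) hc
      _ = ((k - l : ℕ) : ℝ) * c := by rw [Finset.sum_const, htail_card, nsmul_eq_mul]

lemma half_l1 {p q : Fin k → ℝ} (hsum : ∑ i, q i = ∑ i, p i) {δ : ℝ}
    (hd : ∑ i, |q i - p i| ≤ δ) (s : Finset (Fin k)) :
    ∑ i ∈ s, (p i - q i) ≤ δ / 2 ∧ ∑ i ∈ s, (q i - p i) ≤ δ / 2 := by
  have htot : ∑ i ∈ s, (q i - p i) + ∑ i ∈ sᶜ, (q i - p i) = 0 := by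
    rw [Finset.sum_add_sum_compl]
    rw [Finset.sum_sub_distrib, hsum]
    ring
  have h1 : ∑ i ∈ s, (q i - p i) ≤ ∑ i ∈ s, |q i - p i| :=
    Finset.sum_le_sum (fun i _ => le_abs_self _)
  have h2 : ∑ i ∈ sᶜ, (q i - p i) ≤ ∑ i ∈ sᶜ, |q i - p i| :=
    Finset.sum_le_sum (fun i _ => le_abs_self _)
  have h1' : ∑ i ∈ s, (p i - q i) ≤ ∑ i ∈ s, |q i - p i| :=
    Finset.sum_le_sum (fun i _ => by rw [abs_sub_comm]; exact le_abs_self _)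
  have h2' : ∑ i ∈ sᶜ, (p i - q i) ≤ ∑ i ∈ sᶜ, |q i - p i| :=
    Finset.sum_le_sum (fun i _ => by rw [abs_sub_comm]; exact le_abs_self _)
  have habs : ∑ i ∈ s, |q i - p i| + ∑ i ∈ sᶜ, |q i - p i| = ∑ i, |q i - p i| :=
    Finset.sum_add_sum_compl s _
  have hneg : ∑ i ∈ sᶜ, (p i - q i) = - ∑ i ∈ sᶜ, (q i - p i) := by
    rw [← Finset.sum_neg_distrib]
    apply Finset.sum_congr rfl; intro i _; ring
  have hneg2 : ∑ i ∈ s, (p i - q i) = - ∑ i ∈ s, (q i - p i) := by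
    rw [← Finset.sum_neg_distrib]
    apply Finset.sum_congr rfl; intro i _; ring
  constructor <;> linarith [h1, h2, h1', h2', habs, htot, hd, hneg, hneg2]

lemma downward_eq (S : Finset (Fin k)) (hS : ∀ i j : Fin k, i ≤ j → j ∈ S → i ∈ S) :
    S = univ.filter (fun i : Fin k => (i : ℕ) < S.card) := by
  have hSk : S.card ≤ k := by simpa using Finset.card_le_card (Finset.subset_univ S)
  symm
  apply Finset.eq_of_subset_of_card_le
  · intro i hi
    simp only [Finset.mem_filter, Finset.mem_univ, true_and] at hi
    by_contra hcon
    have hsub : S ⊆ univ.filter (fun j : Fin k => (j : ℕ) < (i : ℕ)) := by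
      intro j hj
      simp only [Finset.mem_filter, Finset.mem_univ, true_and]
      by_contra hji
      exact hcon (hS i j (by rw [Fin.le_def]; omega) hj)
    have := Finset.card_le_card hsub
    rw [card_filter_lt (i : ℕ) (le_of_lt i.isLt)] at this
    omega
  · rw [card_filter_lt S.card hSk]
end H3

section H4
variable {k : ℕ}

lemma epsFn_eq_max (p : Fin k → ℝ) (x : ℝ) :
    epsFn p x = ∑ i, max (p i - x) 0 := by
  rw [epsFn, Finset.sum_filter]
  apply Finset.sum_congr rfl
  intro i _
  rcases le_or_gt x (p i) with h | h
  · rw [if_pos h, max_eq_left (by linarith)]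
  · rw [if_neg (not_le.mpr h), max_eq_right (by linarith)]

lemma gammaFn_eq_max (p : Fin k → ℝ) (y : ℝ) :
    gammaFn p y = ∑ i, max (y - p i) 0 := by
  rw [gammaFn, Finset.sum_filter]
  apply Finset.sum_congr rfl
  intro i _
  rcases le_or_gt (p i) y with h | h
  · rw [if_pos h, max_eq_left (by linarith)]
  · rw [if_neg (not_le.mpr h), max_eq_right (by linarith)]

lemma epsFn_anti (p : Fin k → ℝ) : Antitone (epsFn p) := by
  intro x y hxy
  rw [epsFn_eq_max, epsFn_eq_max]
  apply Finset.sum_le_sum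
  intro i _
  exact max_le_max (by linarith) le_rfl

lemma gammaFn_mono (p : Fin k → ℝ) : Monotone (gammaFn p) := by
  intro x y hxy
  rw [gammaFn_eq_max, gammaFn_eq_max]
  apply Finset.sum_le_sum
  intro i _
  exact max_le_max (by linarith) le_rfl

lemma eps_gamma_unif (p : Fin k → ℝ) (hp1 : ∑ i, p i = 1) (hk : 0 < k) :
    epsFn p ((k : ℝ)⁻¹) = l1dist p (unif k) / 2 ∧
    gammaFn p ((k : ℝ)⁻¹) = l1dist p (unif k) / 2 := by
  set u : ℝ := (k : ℝ)⁻¹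
  have hkne : (k : ℝ) ≠ 0 := Nat.cast_ne_zero.mpr hk.ne'
  have hsum : ∑ i : Fin k, (p i - u) = 0 := by
    rw [Finset.sum_sub_distrib, hp1, Finset.sum_const, Finset.card_univ, Fintype.card_fin,
      nsmul_eq_mul, mul_inv_cancel₀ hkne]
    ring
  have hdiff : epsFn p u - gammaFn p u = 0 := by
    rw [epsFn_eq_max, gammaFn_eq_max, ← Finset.sum_sub_distrib]
    have e1 : ∑ i : Fin k, (max (p i - u) 0 - max (u - p i) 0) = ∑ i : Fin k, (p i - u) := by
      apply Finset.sum_congr rfl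
      intro i _
      rcases le_or_gt u (p i) with h | h
      · rw [max_eq_left (by linarith), max_eq_right (by linarith)]; ring
      · rw [max_eq_right (by linarith), max_eq_left (by linarith)]; ring
    rw [e1, hsum]
  have hadd : epsFn p u + gammaFn p u = l1dist p (unif k) := by
    rw [epsFn_eq_max, gammaFn_eq_max, ← Finset.sum_add_distrib, l1dist]
    apply Finset.sum_congr rfl
    intro i _
    show max (p i - u) 0 + max (u - p i) 0 = |p i - u|
    rcases le_or_gt u (p i) with h | h
    · rw [max_eq_left (by linarith), max_eq_right (by linarith), abs_of_nonneg (by linarith)]; ring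
    · rw [max_eq_right (by linarith), max_eq_left (by linarith), abs_of_neg (by linarith)]; ring
  constructor <;> linarith
end H4

/-- for a Schur-convex `f`, the smoothed minimum
`f̲^(δ)(p) = min_{‖q−p‖≤δ} f(q)` is attained at the flattest `δ`-approximation `p̲^(δ)`. -/
theorem schurConvex_smooth_min {k : ℕ} (f : (Fin k → ℝ) → ℝ)
    (hf : ∀ a b : Fin k → ℝ, IsProbDist a → IsProbDist b → Majorizes a b → f b ≤ f a)
    (δ : ℝ) (hδ : 0 ≤ δ)
    (p : Fin k → ℝ) (hp : IsProbDist p) (hord : Antitone p)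
    (pflat : Fin k → ℝ) (hpflat : IsFlattest δ p pflat) :
    IsProbDist pflat ∧ l1dist p pflat ≤ δ ∧
      ∀ q : Fin k → ℝ, IsProbDist q → l1dist q p ≤ δ → f pflat ≤ f q := by
  classical
  obtain ⟨hp0, hp1⟩ := hp
  have hk : 0 < k := by
    by_contra hc
    push_neg at hc
    have hk0 : k = 0 := by omega
    subst hk0
    simp at hp1
  have hkne : (k : ℝ) ≠ 0 := Nat.cast_ne_zero.mpr hk.ne'
  have hsum_unif : ∑ i, unif k i = 1 := by
    simp only [unif]
    rw [Finset.sum_const, Finset.card_univ, Fintype.card_fin, nsmul_eq_mul,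
      mul_inv_cancel₀ hkne]
  have hunifPD : IsProbDist (unif k) :=
    ⟨fun i => inv_nonneg.mpr (Nat.cast_nonneg k), hsum_unif⟩
  rcases hpflat with ⟨hld, rfl⟩ | ⟨hgt, x, y, hx01, hy01, hex, hgy, hform⟩
  · -- uniform case
    refine ⟨hunifPD, hld, ?_⟩
    intro q hq hdq
    apply hf q (unif k) hq hunifPD
    constructor
    · rw [hq.2, hsum_unif]
    · intro l hl1 hlk
      have hds : descSort (unif k) = unif k := rfl
      rw [hds]
      have hL : psum (unif k) l = (l : ℝ) * (k : ℝ)⁻¹ := by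
        rw [psum]
        simp only [unif]
        rw [Finset.sum_const, card_filter_lt l hlk, nsmul_eq_mul]
      rw [hL]
      apply head_thresh (antitone_descSort q) ((k : ℝ)⁻¹) hlk le_rfl
      rw [psum_univ, sum_descSort, hq.2, mul_inv_cancel₀ hkne]
  · -- flattest case
    set S := univ.filter (fun i : Fin k => x ≤ p i) with hSdef
    set B := univ.filter (fun i : Fin k => p i ≤ y) with hBdef
    set A := S.card with hAdef
    set m := k - B.card with hmdef
    have hBk : B.card ≤ k := by simpa using Finset.card_le_card (Finset.subset_univ B)
    have hAk : A ≤ k := by simpa using Finset.card_le_card (Finset.subset_univ S)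
    have hmk : m ≤ k := by omega
    have hkm : k - m = B.card := by omega
    -- y < x
    have heg := eps_gamma_unif p hp1 hk
    have hxu : (k : ℝ)⁻¹ < x := by
      by_contra hc
      push_neg at hc
      have h1 := epsFn_anti p hc
      rw [hex, heg.1] at h1
      linarith
    have hyu : y < (k : ℝ)⁻¹ := by
      by_contra hc
      push_neg at hc
      have h1 := gammaFn_mono p hc
      rw [hgy, heg.2] at h1
      linarith
    have hyx : y < x := lt_trans hyu hxu
    -- structure of S and B
    have hSeq : S = univ.filter (fun i : Fin k => (i : ℕ) < A) := by
      apply downward_eq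
      intro i j hij hj
      rw [hSdef, Finset.mem_filter] at hj ⊢
      exact ⟨Finset.mem_univ i, le_trans hj.2 (hord hij)⟩
    have hSiff : ∀ i : Fin k, x ≤ p i ↔ (i : ℕ) < A := by
      intro i
      constructor
      · intro h
        have : i ∈ S := by rw [hSdef, Finset.mem_filter]; exact ⟨Finset.mem_univ i, h⟩
        rw [hSeq, Finset.mem_filter] at this; exact this.2
      · intro h
        have : i ∈ S := by rw [hSeq, Finset.mem_filter]; exact ⟨Finset.mem_univ i, h⟩
        rw [hSdef, Finset.mem_filter] at this; exact this.2
    have hBccard : (univ.filter (fun i : Fin k => ¬ p i ≤ y)).card = m := by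
      have := Finset.card_filter_add_card_filter_not (s := univ)
        (p := fun i : Fin k => p i ≤ y)
      rw [Finset.card_univ, Fintype.card_fin, ← hBdef] at this
      omega
    have hBceq : univ.filter (fun i : Fin k => ¬ p i ≤ y)
        = univ.filter (fun i : Fin k => (i : ℕ) < m) := by
      rw [← hBccard]
      apply downward_eq
      intro i j hij hj
      rw [Finset.mem_filter] at hj ⊢
      refine ⟨Finset.mem_univ i, ?_⟩
      push_neg at hj ⊢
      exact lt_of_lt_of_le hj.2 (hord hij)
    have hBiff : ∀ i : Fin k, p i ≤ y ↔ m ≤ (i : ℕ) := by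
      intro i
      constructor
      · intro h
        by_contra hc
        push_neg at hc
        have : i ∈ univ.filter (fun i : Fin k => (i : ℕ) < m) := by
          rw [Finset.mem_filter]; exact ⟨Finset.mem_univ i, hc⟩
        rw [← hBceq, Finset.mem_filter] at this
        exact this.2 h
      · intro h
        by_contra hc
        have : i ∈ univ.filter (fun i : Fin k => ¬ p i ≤ y) := by
          rw [Finset.mem_filter]; exact ⟨Finset.mem_univ i, hc⟩
        rw [hBceq, Finset.mem_filter] at this
        omega
    have hBeq : B = univ.filter (fun i : Fin k => m ≤ (i : ℕ)) := by
      rw [hBdef]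
      apply Finset.filter_congr
      intro i _
      exact hBiff i
    have hAm : A ≤ m := by
      by_contra hc
      push_neg at hc
      have hmlt : m < k := lt_of_lt_of_le hc hAk
      set i : Fin k := ⟨m, hmlt⟩
      have h1 : x ≤ p i := (hSiff i).mpr hc
      have h2 : p i ≤ y := (hBiff i).mpr le_rfl
      linarith
    -- region values
    have hf1 : ∀ i : Fin k, (i : ℕ) < A → pflat i = x := by
      intro i hi
      rw [hform i, if_pos ((hSiff i).mpr hi)]
    have hf3 : ∀ i : Fin k, m ≤ (i : ℕ) → pflat i = y := by
      intro i hi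
      have hpy : p i ≤ y := (hBiff i).mpr hi
      rw [hform i, if_neg (by linarith), if_pos hpy]
    have hf2 : ∀ i : Fin k, A ≤ (i : ℕ) → (i : ℕ) < m → pflat i = p i := by
      intro i hi1 hi2
      have h1 : ¬ x ≤ p i := fun h => absurd ((hSiff i).mp h) (by omega)
      have h2 : ¬ p i ≤ y := fun h => absurd ((hBiff i).mp h) (by omega)
      rw [hform i, if_neg h1, if_neg h2]
    -- sum relations
    have hSp : ∑ i ∈ S, p i = (A : ℝ) * x + δ / 2 := by
      have h1 : epsFn p x = (∑ i ∈ S, p i) - (A : ℝ) * x := by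
        rw [epsFn, Finset.sum_sub_distrib, Finset.sum_const, nsmul_eq_mul]
      rw [hex] at h1
      linarith
    have hBp : ∑ i ∈ B, p i = ((k - m : ℕ) : ℝ) * y - δ / 2 := by
      have h1 : gammaFn p y = ((k - m : ℕ) : ℝ) * y - ∑ i ∈ B, p i := by
        rw [gammaFn, Finset.sum_sub_distrib, Finset.sum_const, nsmul_eq_mul, hkm]
      rw [hgy] at h1
      linarith
    have hpsum_pA : psum p A = (A : ℝ) * x + δ / 2 := by
      rw [psum, ← hSeq]; exact hSp
    have htailS_pm : tailS p m = ((k - m : ℕ) : ℝ) * y - δ / 2 := by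
      rw [tailS, ← hBeq]; exact hBp
    -- pflat partial sums
    have hpsum_flat_low : ∀ l : ℕ, l ≤ A → psum pflat l = (l : ℝ) * x := by
      intro l hl
      rw [psum]
      rw [Finset.sum_congr rfl (fun i hi => by
        rw [Finset.mem_filter] at hi
        exact hf1 i (lt_of_lt_of_le hi.2 hl) : ∀ i ∈ univ.filter (fun i : Fin k => (i : ℕ) < l), pflat i = x)]
      rw [Finset.sum_const, card_filter_lt l (le_trans hl hAk), nsmul_eq_mul]
    have htail_flat : ∀ l : ℕ, m ≤ l → tailS pflat l = ((k - l : ℕ) : ℝ) * y := by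
      intro l hl
      rw [tailS]
      rw [Finset.sum_congr rfl (fun i hi => by
        rw [Finset.mem_filter] at hi
        exact hf3 i (le_trans hl hi.2) : ∀ i ∈ univ.filter (fun i : Fin k => l ≤ (i : ℕ)), pflat i = y)]
      rw [Finset.sum_const, card_filter_ge l, nsmul_eq_mul]
    have hmid_flat : ∀ l : ℕ, l ≤ m →
        ∑ i ∈ univ.filter (fun i : Fin k => A ≤ (i : ℕ) ∧ (i : ℕ) < l), pflat i
        = ∑ i ∈ univ.filter (fun i : Fin k => A ≤ (i : ℕ) ∧ (i : ℕ) < l), p i := by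
      intro l hl
      apply Finset.sum_congr rfl
      intro i hi
      rw [Finset.mem_filter] at hi
      exact hf2 i hi.2.1 (lt_of_lt_of_le hi.2.2 hl)
    have hpsum_flat_mid : ∀ l : ℕ, A ≤ l → l ≤ m → psum pflat l = psum p l - δ / 2 := by
      intro l hAl hlm
      rw [psum_split pflat hAl, psum_split p hAl, hmid_flat l hlm,
        hpsum_flat_low A le_rfl, hpsum_pA]
      ring
    have hsum_flat : ∑ i, pflat i = 1 := by
      have h1 := psum_add_tailS pflat m
      have h2 := psum_add_tailS p m
      rw [hp1] at h2
      rw [hpsum_flat_mid m hAm le_rfl, htail_flat m le_rfl, htailS_pm] at *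
      linarith
    -- pflat is a probability distribution
    have hflatPD : IsProbDist pflat := by
      refine ⟨?_, hsum_flat⟩
      intro i
      rcases lt_or_ge (i : ℕ) A with h | h
      · rw [hf1 i h]; exact hx01.1
      rcases lt_or_ge (i : ℕ) m with h2 | h2
      · rw [hf2 i h h2]; exact hp0 i
      · rw [hf3 i h2]; exact hy01.1
    -- l1 distance
    have hl1 : l1dist p pflat ≤ δ := by
      have hterm1 : ∀ i ∈ univ.filter (fun i : Fin k => (i : ℕ) < A),
          |p i - pflat i| = p i - x := by
        intro i hi
        rw [Finset.mem_filter] at hi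
        rw [hf1 i hi.2]
        exact abs_of_nonneg (by linarith [(hSiff i).mpr hi.2])
      have hterm2 : ∀ i ∈ univ.filter (fun i : Fin k => A ≤ (i : ℕ) ∧ (i : ℕ) < m),
          |p i - pflat i| = 0 := by
        intro i hi
        rw [Finset.mem_filter] at hi
        rw [hf2 i hi.2.1 hi.2.2, sub_self, abs_zero]
      have hterm3 : ∀ i ∈ univ.filter (fun i : Fin k => m ≤ (i : ℕ)),
          |p i - pflat i| = y - p i := by
        intro i hi
        rw [Finset.mem_filter] at hi
        rw [hf3 i hi.2, abs_of_nonpos (by linarith [(hBiff i).mpr hi.2]), neg_sub]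
      show ∑ i, |p i - pflat i| ≤ δ
      have e0 : psum (fun i => |p i - pflat i|) m + tailS (fun i => |p i - pflat i|) m
          = ∑ i, |p i - pflat i| := psum_add_tailS _ m
      have eA : psum (fun i => |p i - pflat i|) A
          = ∑ i ∈ univ.filter (fun i : Fin k => (i : ℕ) < A), (p i - x) := by
        rw [psum]; exact Finset.sum_congr rfl hterm1
      have eA2 : ∑ i ∈ univ.filter (fun i : Fin k => (i : ℕ) < A), (p i - x) = δ / 2 := by
        rw [Finset.sum_sub_distrib, Finset.sum_const, card_filter_lt A hAk, nsmul_eq_mul]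
        have h9 := hpsum_pA
        rw [psum] at h9
        linarith
      have eM : ∑ i ∈ univ.filter (fun i : Fin k => A ≤ (i : ℕ) ∧ (i : ℕ) < m),
          (fun i => |p i - pflat i|) i = 0 := Finset.sum_eq_zero hterm2
      have e1 : psum (fun i => |p i - pflat i|) m = δ / 2 := by
        rw [psum_split (fun i => |p i - pflat i|) hAm, eM, eA, eA2]
        ring
      have eT : tailS (fun i => |p i - pflat i|) m
          = ∑ i ∈ univ.filter (fun i : Fin k => m ≤ (i : ℕ)), (y - p i) := by
        rw [tailS]; exact Finset.sum_congr rfl hterm3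
      have eT2 : ∑ i ∈ univ.filter (fun i : Fin k => m ≤ (i : ℕ)), (y - p i) = δ / 2 := by
        rw [Finset.sum_sub_distrib, Finset.sum_const, card_filter_ge m, nsmul_eq_mul]
        have h9 := htailS_pm
        rw [tailS] at h9
        linarith
      have e2 : tailS (fun i => |p i - pflat i|) m = δ / 2 := by rw [eT, eT2]
      linarith
    -- pflat is antitone
    have hflat_anti : Antitone pflat := by
      intro i j hij
      have hij' : (i : ℕ) ≤ (j : ℕ) := hij
      rcases lt_or_ge (j : ℕ) A with hjA | hjA
      · rw [hf1 i (by omega), hf1 j hjA]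
      rcases lt_or_ge (j : ℕ) m with hjm | hjm
      · rw [hf2 j hjA hjm]
        rcases lt_or_ge (i : ℕ) A with hiA | hiA
        · rw [hf1 i hiA]
          have : ¬ x ≤ p j := fun h => absurd ((hSiff j).mp h) (by omega)
          linarith
        · rw [hf2 i hiA (by omega)]
          exact hord hij
      · rw [hf3 j hjm]
        rcases lt_or_ge (i : ℕ) A with hiA | hiA
        · rw [hf1 i hiA]; exact le_of_lt hyx
        rcases lt_or_ge (i : ℕ) m with him | him
        · rw [hf2 i hiA him]
          have : ¬ p i ≤ y := fun h => absurd ((hBiff i).mp h) (by omega)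
          linarith
        · rw [hf3 i him]
    refine ⟨hflatPD, hl1, ?_⟩
    intro q hq hdq
    apply hf q pflat hq hflatPD
    constructor
    · rw [hq.2, hsum_flat]
    · intro l hl1' hlk
      have hg_anti := antitone_descSort q
      have hgsum : ∑ i, descSort q i = 1 := by rw [sum_descSort, hq.2]
      have hqp : ∑ i, q i = ∑ i, p i := by rw [hq.2, hp1]
      have hdq' : ∑ i, |q i - p i| ≤ δ := hdq
      refine le_trans (psum_descSort_le hflat_anti hlk) ?_
      rcases le_or_gt l A with hcase | hcase
      · -- l ≤ A
        rw [hpsum_flat_low l hcase]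
        have h1 : ∑ i ∈ S, q i ≤ psum (descSort q) A := sum_le_psum_descSort q S
        have h2 : ∑ i ∈ S, (p i - q i) ≤ δ / 2 := (half_l1 hqp hdq' S).1
        rw [Finset.sum_sub_distrib] at h2
        have h4 : (A : ℝ) * x ≤ psum (descSort q) A := by linarith [hSp]
        exact head_thresh hg_anti x hcase hAk h4
      rcases le_or_gt l m with hcase2 | hcase2
      · -- A < l ≤ m
        rw [hpsum_flat_mid l (le_of_lt hcase) hcase2]
        have h1 : ∑ i ∈ univ.filter (fun i : Fin k => (i : ℕ) < l), q i
            ≤ psum (descSort q) l := by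
          have := sum_le_psum_descSort q (univ.filter (fun i : Fin k => (i : ℕ) < l))
          rwa [card_filter_lt l hlk] at this
        have h2 := (half_l1 hqp hdq' (univ.filter (fun i : Fin k => (i : ℕ) < l))).1
        rw [Finset.sum_sub_distrib] at h2
        have h3 : psum p l = ∑ i ∈ univ.filter (fun i : Fin k => (i : ℕ) < l), p i := rfl
        linarith
      · -- m < l
        have e1 : psum pflat l = 1 - ((k - l : ℕ) : ℝ) * y := by
          have := psum_add_tailS pflat l
          rw [htail_flat l (le_of_lt hcase2), hsum_flat] at this
          linarith
        have e2 : psum (descSort q) l = 1 - tailS (descSort q) l := by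
          have := psum_add_tailS (descSort q) l
          rw [hgsum] at this
          linarith
        rw [e1, e2]
        have hBcompl : Bᶜ = univ.filter (fun i : Fin k => ¬ p i ≤ y) := by
          rw [hBdef, Finset.compl_filter]
        have hBccard2 : (Bᶜ).card = m := by rw [hBcompl, hBccard]
        have h5 : ∑ i ∈ Bᶜ, q i ≤ psum (descSort q) m := by
          have := sum_le_psum_descSort q Bᶜ
          rwa [hBccard2] at this
        have hq1 : ∑ i ∈ B, q i + ∑ i ∈ Bᶜ, q i = 1 := by
          rw [Finset.sum_add_sum_compl, hq.2]
        have h6 : tailS (descSort q) m ≤ ∑ i ∈ B, q i := by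
          have := psum_add_tailS (descSort q) m
          rw [hgsum] at this
          linarith
        have h7 : ∑ i ∈ B, q i ≤ ((k - m : ℕ) : ℝ) * y := by
          have h2 := (half_l1 hqp hdq' B).2
          rw [Finset.sum_sub_distrib] at h2
          linarith [hBp]
        have h8 := tail_thresh hg_anti y (le_of_lt hcase2) hlk hl1' (by linarith)
        linarith
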